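/- Let A ∈ ℂ^{m×n} be injective with entries A_{k,i} = xₖ^{dᵢ}, and define B ∈ ℂ^{n×C(m,n−1)} by B_{i,l} = (−1)^i s_{λ[i]}(x_l) V(x_l) / sqrt(∑_{k ∈ C([m],n)} |s_λ(x_k) V(x_k)|²) for l ∈ C([m],n−1). Then the Moore–Penrose pseudoinverse of A satisfies A⁺ = (A*A)^{−1}A* = B B* A* = B (A B)*. -/

import Mathlib

open scoped BigOperators ComplexConjugate Matrix

/-- Vandermonde product `V(z) = ∏_{i<j} (z_i − z_j)`. -/
noncomputable def vand {n : ℕ} (z : Fin n → ℂ) : ℂ :=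
  ∏ i : Fin n, ∏ j ∈ Finset.Ioi i, (z i - z j)

/-- Schur polynomial `s_λ(z) = det(z_i^{λ_j + n−1−j}) / V(z)` (junk value 0 if `V(z)=0`). -/
noncomputable def schur {n : ℕ} (lam : Fin n → ℕ) (z : Fin n → ℂ) : ℂ :=
  Matrix.det (Matrix.of fun i j : Fin n => z i ^ (lam j + (n - 1 - (j : ℕ)))) / vand z

/-- The subvector of `x` indexed by an `n`-element subset of `Fin m` (in increasing order). -/
def subvec {m n : ℕ} (x : Fin m → ℂ) (s : {t : Finset (Fin m) // t.card = n}) :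
    Fin n → ℂ := fun i => x (s.1.orderEmbOfFin s.2 i)



section AuxCB
open Finset Equiv Matrix

private theorem cb_aux {n m : ℕ} {M : Matrix (Fin n) (Fin m) ℂ} {N : Matrix (Fin m) (Fin n) ℂ}
    {p : Fin n → Fin m} (H : ¬Function.Injective p) :
    (∑ σ : Perm (Fin n), ((Perm.sign σ : ℤ) : ℂ) * ∏ x, M (σ x) (p x) * N (p x) x) = 0 := by
  obtain ⟨i, j, hpij, hij⟩ : ∃ i j, p i = p j ∧ i ≠ j := by
    rw [Function.Injective] at H
    push_neg at H
    obtain ⟨i, j, h1, h2⟩ := H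
    exact ⟨i, j, h1, h2⟩
  exact Finset.sum_involution (fun σ _ => σ * Equiv.swap i j)
    (fun σ _ => by
      have : (∏ x, M (σ x) (p x)) = ∏ x, M ((σ * Equiv.swap i j) x) (p x) :=
        Fintype.prod_equiv (Equiv.swap i j) _ _ (by simp [Equiv.apply_swap_eq_self hpij])
      simp [this, Perm.sign_swap hij, -Perm.sign_swap', Finset.prod_mul_distrib])
    (fun σ _ _ => (not_congr Equiv.mul_swap_eq_iff).mpr hij) (fun _ _ => Finset.mem_univ _)
    fun σ _ => Equiv.mul_swap_involutive i j σ

private theorem cb_expand {n m : ℕ} (M : Matrix (Fin n) (Fin m) ℂ) (N : Matrix (Fin m) (Fin n) ℂ) :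
    (M * N).det = ∑ p ∈ Finset.univ.filter (fun p : Fin n → Fin m => Function.Injective p),
      ∑ σ : Perm (Fin n), ((Perm.sign σ : ℤ) : ℂ) * ∏ i, M (σ i) (p i) * N (p i) i := by
  have h1 : (M * N).det = ∑ p : Fin n → Fin m,
      ∑ σ : Perm (Fin n), ((Perm.sign σ : ℤ) : ℂ) * ∏ i, M (σ i) (p i) * N (p i) i := by
    simp only [Matrix.det_apply', Matrix.mul_apply, Finset.prod_univ_sum, Finset.mul_sum,
      Fintype.piFinset_univ]
    rw [Finset.sum_comm]
  rw [h1]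
  refine (Finset.sum_subset (Finset.filter_subset _ _) fun f _ hf => cb_aux ?_).symm
  simpa only [true_and, Finset.mem_filter, Finset.mem_univ] using hf


private theorem orderEmb_inv {m n : ℕ} (s : Finset (Fin m)) (hs : s.card = n) (a : Fin m)
    (ha : a ∈ s) : s.orderEmbOfFin hs ((s.orderIsoOfFin hs).symm ⟨a, ha⟩) = a := by
  have := (s.orderIsoOfFin hs).apply_symm_apply ⟨a, ha⟩
  have h2 := Finset.coe_orderIsoOfFin_apply s hs ((s.orderIsoOfFin hs).symm ⟨a, ha⟩)
  rw [this] at h2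
  exact h2.symm

private theorem image_orderEmbOfFin {m n : ℕ} (s : Finset (Fin m)) (hs : s.card = n) :
    Finset.univ.image (s.orderEmbOfFin hs) = s := by
  apply Finset.coe_injective
  rw [Finset.coe_image, Finset.coe_univ, Set.image_univ, Finset.range_orderEmbOfFin]





private theorem image_comp_eq {n m : ℕ} (s : {t : Finset (Fin m) // t.card = n})
    {q : Fin n → Fin n} (hq : Function.Injective q) :
    Finset.univ.image (s.1.orderEmbOfFin s.2 ∘ q) = s.1 := by
  have hbij : Function.Bijective q := Finite.injective_iff_bijective.mp hq
  rw [← Finset.image_image, Finset.image_univ_of_surjective hbij.2]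
  exact image_orderEmbOfFin s.1 s.2

private theorem sum_inj_split {n m : ℕ} (F : (Fin n → Fin m) → ℂ) :
    ∑ p ∈ Finset.univ.filter (fun p : Fin n → Fin m => Function.Injective p), F p
    = ∑ s : {t : Finset (Fin m) // t.card = n},
        ∑ q ∈ Finset.univ.filter (fun q : Fin n → Fin n => Function.Injective q),
          F (s.1.orderEmbOfFin s.2 ∘ q) := by
  classical
  rw [← Finset.sum_product']
  refine (Finset.sum_bij (fun x _ => x.1.1.orderEmbOfFin x.1.2 ∘ x.2) ?_ ?_ ?_ ?_).symm
  · rintro ⟨s, q⟩ hx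
    simp only [Finset.mem_product, Finset.mem_filter, Finset.mem_univ, true_and] at hx ⊢
    exact (s.1.orderEmbOfFin s.2).injective.comp hx
  · rintro ⟨s, q⟩ hx ⟨s', q'⟩ hx' h
    simp only [Finset.mem_product, Finset.mem_filter, Finset.mem_univ, true_and] at hx hx'
    have h' : s.1.orderEmbOfFin s.2 ∘ q = s'.1.orderEmbOfFin s'.2 ∘ q' := h
    have hs : s = s' := by
      apply Subtype.ext
      rw [← image_comp_eq s hx, ← image_comp_eq s' hx', h']
    subst hs
    have hq : q = q' := by
      funext i
      exact (s.1.orderEmbOfFin s.2).injective (congrFun h' i)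
    rw [hq]
  · intro p hp
    simp only [Finset.mem_filter, Finset.mem_univ, true_and] at hp
    have hcard : (Finset.univ.image p).card = n := by
      rw [Finset.card_image_of_injective _ hp, Finset.card_univ, Fintype.card_fin]
    refine ⟨(⟨⟨_, hcard⟩, fun i => ((Finset.univ.image p).orderIsoOfFin hcard).symm
      ⟨p i, Finset.mem_image_of_mem p (Finset.mem_univ i)⟩⟩ :
        {t : Finset (Fin m) // t.card = n} × (Fin n → Fin n)), ?_, ?_⟩
    · simp only [Finset.mem_product, Finset.mem_filter, Finset.mem_univ, true_and]
      intro a b hab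
      exact hp (congrArg Subtype.val
        (((Finset.univ.image p).orderIsoOfFin hcard).symm.injective hab))
    · funext i
      exact orderEmb_inv _ hcard (p i) (Finset.mem_image_of_mem p (Finset.mem_univ i))
  · intro x hx
    rfl

private theorem cauchy_binet {n m : ℕ} (M : Matrix (Fin n) (Fin m) ℂ)
    (N : Matrix (Fin m) (Fin n) ℂ) :
    (M * N).det = ∑ s : {t : Finset (Fin m) // t.card = n},
      (M.submatrix id (s.1.orderEmbOfFin s.2)).det *
        (N.submatrix (s.1.orderEmbOfFin s.2) id).det := by
  classical
  rw [cb_expand, sum_inj_split]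
  refine Finset.sum_congr rfl fun s _ => ?_
  rw [← Matrix.det_mul, cb_expand]
  refine Finset.sum_congr rfl fun q _ => ?_
  refine Finset.sum_congr rfl fun σ _ => ?_
  simp [Matrix.submatrix_apply, Function.comp]

theorem schur_mul_vand {n : ℕ} (lam : Fin n → ℕ) (z : Fin n → ℂ) :
    schur lam z * vand z
      = (Matrix.of fun i j : Fin n => z i ^ (lam j + (n - 1 - (j : ℕ)))).det := by
  by_cases h : vand z = 0
  · simp only [schur, h, div_zero, zero_mul]
    obtain ⟨i, -, hi⟩ := Finset.prod_eq_zero_iff.mp h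
    obtain ⟨j, hj, hij⟩ := Finset.prod_eq_zero_iff.mp hi
    have hzz : z i = z j := by linear_combination hij
    refine (Matrix.det_zero_of_row_eq (M := Matrix.of fun i j : Fin n =>
      z i ^ (lam j + (n - 1 - (j : ℕ)))) (i := i) (j := j) ?_ ?_).symm
    · exact fun he => (Finset.mem_Ioi.mp hj).ne' he.symm
    · funext c; simp [hzz]
  · simp only [schur]
    rw [div_mul_cancel₀ _ h]

theorem d_lower {N : ℕ} {d : Fin (N + 1) → ℕ} (hd : StrictAnti d) (j : Fin (N + 1)) :
    N - (j : ℕ) ≤ d j := by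
  have key : ∀ t : ℕ, ∀ j : Fin (N + 1), (j : ℕ) + t = N → t ≤ d j := by
    intro t
    induction t with
    | zero => intro j _; exact Nat.zero_le _
    | succ t ih =>
      intro j hj
      have hj1 : (j : ℕ) + 1 < N + 1 := by omega
      have h1 := hd (show j < ⟨(j : ℕ) + 1, hj1⟩ by simp [Fin.lt_def])
      have h2 := ih ⟨(j : ℕ) + 1, hj1⟩ (by simp; omega)
      omega
  rcases le_or_gt (j : ℕ) N with h | h
  · exact key (N - (j : ℕ)) j (by omega)
  · omega

theorem succAbove_le {N : ℕ} (i : Fin (N + 1)) (r : Fin N) :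
    ((i.succAbove r : Fin (N + 1)) : ℕ) ≤ (r : ℕ) + 1 := by
  rw [Fin.succAbove]
  split <;> simp

end AuxCB

/-- with `B` defined by `B_{i,l} = (−1)^i s_{λ[i]}(x_l) V(x_l) / sqrt(∑|s_λ V|²)`
(columns indexed by `C([m], n−1)`, `n = N+1`; the paper's `i` is 1-based, hence the sign
`(−1)^{i+1}` for 0-based `i`), the Moore–Penrose pseudoinverse of the injective matrix `A`
satisfies `A⁺ = (A*A)⁻¹A* = B B* A* = B (A B)*`. -/
theorem pseudoinverse_eq (m N : ℕ) (hmn : N + 1 ≤ m)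
    (d : Fin (N + 1) → ℕ) (hd : StrictAnti d) (x : Fin m → ℂ)
    (A : Matrix (Fin m) (Fin (N + 1)) ℂ) (hA : ∀ k i, A k i = x k ^ d i)
    (hinj : Function.Injective A.mulVec)
    (B : Matrix (Fin (N + 1)) {t : Finset (Fin m) // t.card = N} ℂ)
    (hB : ∀ i l, B i l = (-1 : ℂ) ^ ((i : ℕ) + 1) *
        schur (fun r : Fin N => d (i.succAbove r) - (N - 1 - (r : ℕ))) (subvec x l) *
        vand (subvec x l) /
        (Real.sqrt (∑ s : {t : Finset (Fin m) // t.card = N + 1},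
          (‖schur (fun r : Fin (N + 1) => d r - (N - (r : ℕ))) (subvec x s) *
            vand (subvec x s)‖) ^ 2) : ℂ)) :
    (Aᴴ * A)⁻¹ * Aᴴ = B * Bᴴ * Aᴴ ∧ (Aᴴ * A)⁻¹ * Aᴴ = B * (A * B)ᴴ := by
  classical
  -- the full minors
  have expfull : ∀ s : {t : Finset (Fin m) // t.card = N + 1},
      schur (fun r : Fin (N + 1) => d r - (N - (r : ℕ))) (subvec x s) * vand (subvec x s)
        = (A.submatrix (s.1.orderEmbOfFin s.2) id).det := by
    intro s
    rw [schur_mul_vand]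
    congr 1
    ext i j
    have he : d j - (N - (j : ℕ)) + (N + 1 - 1 - (j : ℕ)) = d j := by
      have := d_lower hd j; omega
    simp only [Matrix.of_apply, Matrix.submatrix_apply, id, hA, he, subvec]
  -- the column-deleted minors
  have expdel : ∀ (i : Fin (N + 1)) (l : {t : Finset (Fin m) // t.card = N}),
      schur (fun r : Fin N => d (i.succAbove r) - (N - 1 - (r : ℕ))) (subvec x l) *
        vand (subvec x l)
        = (A.submatrix (l.1.orderEmbOfFin l.2) i.succAbove).det := by
    intro i l
    rw [schur_mul_vand]
    congr 1
    ext a b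
    have h1 : N - ((i.succAbove b : Fin (N + 1)) : ℕ) ≤ d (i.succAbove b) :=
      d_lower hd _
    have h2 := succAbove_le i b
    have he : d (i.succAbove b) - (N - 1 - (b : ℕ)) + (N - 1 - (b : ℕ)) = d (i.succAbove b) := by
      omega
    simp only [Matrix.of_apply, Matrix.submatrix_apply, hA, he, subvec]
  -- denominator
  set D : ℝ := ∑ s : {t : Finset (Fin m) // t.card = N + 1},
      (‖schur (fun r : Fin (N + 1) => d r - (N - (r : ℕ))) (subvec x s) *
        vand (subvec x s)‖) ^ 2 with hD
  have hDnn : 0 ≤ D := Finset.sum_nonneg fun _ _ => sq_nonneg _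
  -- determinant of AᴴA
  have hdet : (Aᴴ * A).det = (D : ℂ) := by
    rw [cauchy_binet, hD]
    push_cast
    refine Finset.sum_congr rfl fun s _ => ?_
    rw [expfull s]
    have hct : Aᴴ.submatrix id (s.1.orderEmbOfFin s.2)
        = (A.submatrix (s.1.orderEmbOfFin s.2) id)ᴴ := rfl
    rw [hct, Matrix.det_conjTranspose, ← Complex.ofReal_pow, Complex.sq_norm,
      Complex.normSq_eq_conj_mul_self]
    rfl
  have hdet0 : (Aᴴ * A).det ≠ 0 := by
    open scoped ComplexOrder in
    intro h
    obtain ⟨v, hv0, hv⟩ := (Matrix.exists_mulVec_eq_zero_iff).mpr h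
    rw [Matrix.conjTranspose_mul_self_mulVec_eq_zero] at hv
    exact hv0 (hinj (by rw [hv, Matrix.mulVec_zero]))
  have hD0 : D ≠ 0 := fun h => hdet0 (by rw [hdet, h, Complex.ofReal_zero])
  have hc2 : ((Real.sqrt D : ℝ) : ℂ) * ((Real.sqrt D : ℝ) : ℂ) = (D : ℂ) := by
    rw [← Complex.ofReal_mul, Real.mul_self_sqrt hDnn]
  have hc0 : ((Real.sqrt D : ℝ) : ℂ) ≠ 0 := by
    simp only [ne_eq, Complex.ofReal_eq_zero]
    exact fun h => hD0 (by have := Real.sqrt_eq_zero hDnn |>.mp h; exact this)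
  -- adjugate entries
  have hadj : ∀ i j : Fin (N + 1), (Aᴴ * A).adjugate i j
      = (-1 : ℂ) ^ ((j : ℕ) + (i : ℕ)) * ∑ l : {t : Finset (Fin m) // t.card = N},
          star ((A.submatrix (l.1.orderEmbOfFin l.2) j.succAbove).det) *
            (A.submatrix (l.1.orderEmbOfFin l.2) i.succAbove).det := by
    intro i j
    rw [Matrix.adjugate_fin_succ_eq_det_submatrix]
    congr 1
    have hsub : (Aᴴ * A).submatrix j.succAbove i.succAbove
        = (Aᴴ.submatrix j.succAbove id) * (A.submatrix id i.succAbove) := by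
      ext a b
      simp [Matrix.mul_apply, Matrix.submatrix_apply]
    rw [hsub, cauchy_binet]
    refine Finset.sum_congr rfl fun l _ => ?_
    rw [Matrix.submatrix_submatrix, Matrix.submatrix_submatrix]
    simp only [Function.comp_id, Function.id_comp]
    have hct : Aᴴ.submatrix j.succAbove (l.1.orderEmbOfFin l.2)
        = (A.submatrix (l.1.orderEmbOfFin l.2) j.succAbove)ᴴ := rfl
    rw [hct, Matrix.det_conjTranspose]
  -- B entries
  have hBent : ∀ i l, B i l = (-1 : ℂ) ^ ((i : ℕ) + 1) *
      (A.submatrix (l.1.orderEmbOfFin l.2) i.succAbove).det / ((Real.sqrt D : ℝ) : ℂ) := by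
    intro i l
    rw [hB i l, mul_assoc, expdel i l]
  -- B * Bᴴ = D⁻¹ • adjugate
  have hBB : B * Bᴴ = ((D : ℂ))⁻¹ • (Aᴴ * A).adjugate := by
    ext i j
    rw [Matrix.mul_apply, Matrix.smul_apply, hadj i j, smul_eq_mul, Finset.mul_sum, Finset.mul_sum]
    refine Finset.sum_congr rfl fun l _ => ?_
    rw [Matrix.conjTranspose_apply, hBent i l, hBent j l]
    rw [star_div₀, star_mul']
    simp only [star_pow, star_neg, star_one, Complex.star_def, Complex.conj_ofReal]
    rw [div_mul_div_comm, hc2]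
    rw [div_eq_mul_inv, mul_comm _ ((D : ℂ))⁻¹, mul_assoc]
    congr 1
    have hsign : ((-1 : ℂ)) ^ ((i : ℕ) + 1) * ((-1 : ℂ)) ^ ((j : ℕ) + 1)
        = ((-1 : ℂ)) ^ ((j : ℕ) + (i : ℕ)) := by
      rw [← pow_add]
      have h2 : (i : ℕ) + 1 + ((j : ℕ) + 1) = (j : ℕ) + (i : ℕ) + 2 := by ring
      rw [h2, pow_add]
      norm_num
    linear_combination ((A.submatrix (l.1.orderEmbOfFin l.2) i.succAbove).det *
      (starRingEnd ℂ) (A.submatrix (l.1.orderEmbOfFin l.2) j.succAbove).det) * hsign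
  -- inverse formula
  have hinv : (Aᴴ * A)⁻¹ = ((D : ℂ))⁻¹ • (Aᴴ * A).adjugate := by
    rw [Matrix.inv_def, hdet, Ring.inverse_eq_inv]
  have h1 : (Aᴴ * A)⁻¹ * Aᴴ = B * Bᴴ * Aᴴ := by rw [hinv, ← hBB]
  refine ⟨h1, ?_⟩
  rw [Matrix.conjTranspose_mul, ← Matrix.mul_assoc]
  exact h1
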